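/- Let n ≥ 2, M > 0, let φ₁,…,φ_n : ℝ → ℝ be integrable on [−M, M], and let c₁, c₂, …, c_n ∈ ℝ. Define m₁ := n − 1 and m_i := n − 2 for i ∈ {2,…,n}, and let A be the n × n matrix with entries A_{ij} := ∫_{−M}^{M} φ_j(z)·((z − c_i)^{m_i}/m_i!) dz. Then det A = (1/(n−1)!)·( ∏_{k=0}^{n−2} 1/k! )² · Δ_{n−1}(c₂,…,c_n) · ∫_{[−M,M]ⁿ} ( ∏_{k=1}^n φ_k(z_k) )·Δ_n(z) dz, where Δ_m(y) := ∏_{1≤i<j≤m}(y_i − y_j). In particular det A does not depend on c₁. -/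

import Mathlib

open MeasureTheory

/-- The Vandermonde product `∏_{i<j} (y i - y j)`. -/
noncomputable def vdm {n : ℕ} (y : Fin n → ℝ) : ℝ :=
  ∏ i : Fin n, ∏ j : Fin n, if i < j then y i - y j else 1

section Aux
open Finset

lemma prod_Ioi_rev {n : ℕ} {M : Type*} [CommMonoid M] (f : Fin n → Fin n → M) :
    ∏ i : Fin n, ∏ j ∈ Ioi i, f (Fin.rev j) (Fin.rev i) = ∏ i : Fin n, ∏ j ∈ Ioi i, f i j := by
  rw [prod_sigma', prod_sigma']
  refine prod_nbij' (fun p => ⟨Fin.rev p.2, Fin.rev p.1⟩) (fun p => ⟨Fin.rev p.2, Fin.rev p.1⟩)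
    ?_ ?_ ?_ ?_ ?_ <;> simp [Fin.rev_lt_rev]

lemma vdm_eq' {n : ℕ} (y : Fin n → ℝ) :
    (∏ i : Fin n, ∏ j : Fin n, if i < j then y i - y j else 1)
      = ∏ i : Fin n, ∏ j ∈ Ioi i, (y i - y j) := by
  refine prod_congr rfl fun i _ => ?_
  rw [← prod_filter, filter_lt_eq_Ioi]

lemma det_revVandermonde {n : ℕ} (v : Fin n → ℝ) :
    Matrix.det (Matrix.of fun i k : Fin n => v i ^ (n - 1 - (k : ℕ)))
      = ∏ i : Fin n, ∏ j ∈ Ioi i, (v i - v j) := by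
  have h : (Matrix.of fun i k : Fin n => v i ^ (n - 1 - (k : ℕ)))
      = (Matrix.vandermonde (fun i => v (Fin.rev i))).submatrix Fin.revPerm Fin.revPerm := by
    ext i k
    simp [Matrix.vandermonde, Fin.val_rev]
    congr 1
    omega
  rw [h, Matrix.det_submatrix_equiv_self, Matrix.det_vandermonde, ← prod_Ioi_rev
    (fun i j => v i - v j)]

lemma binom_entry (m : ℕ) (x y : ℝ) (K : ℕ) (hm : m ≤ K) :
    (x - y) ^ m / (Nat.factorial m : ℝ)
      = ∑ k ∈ Finset.range (K+1),
          (if k ≤ m then (-y) ^ (m - k) / ((Nat.factorial k : ℝ) * (Nat.factorial (m - k))) else 0)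
            * x ^ k := by
  have hz : ∀ k ∈ Finset.range (K+1), k ∉ Finset.range (m+1) →
      (if k ≤ m then (-y) ^ (m - k) / ((Nat.factorial k : ℝ) * (Nat.factorial (m - k))) else 0)
        * x ^ k = 0 := by
    intro k hk hk2
    rw [Finset.mem_range] at hk hk2
    rw [if_neg (by omega), zero_mul]
  rw [← Finset.sum_subset (Finset.range_subset_range.2 (by omega) : Finset.range (m+1) ⊆ _) hz]
  · have : x - y = x + (-y) := by ring
    rw [this, add_pow]
    rw [Finset.sum_div]
    refine Finset.sum_congr rfl fun k hk => ?_
    rw [Finset.mem_range] at hk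
    have hk' : k ≤ m := by omega
    rw [if_pos hk']
    have h := Nat.choose_mul_factorial_mul_factorial hk'
    have h2 : (Nat.choose m k : ℝ) * (Nat.factorial k) * (Nat.factorial (m - k))
        = (Nat.factorial m : ℝ) := by exact_mod_cast congrArg (Nat.cast (R := ℝ)) h
    have hf1 : (Nat.factorial k : ℝ) ≠ 0 := Nat.cast_ne_zero.2 (Nat.factorial_ne_zero _)
    have hf2 : (Nat.factorial (m-k) : ℝ) ≠ 0 := Nat.cast_ne_zero.2 (Nat.factorial_ne_zero _)
    have hf3 : (Nat.factorial m : ℝ) ≠ 0 := Nat.cast_ne_zero.2 (Nat.factorial_ne_zero _)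
    field_simp
    rw [← h2]; ring

lemma cprod (N : ℕ) (c : Fin (N+2) → ℝ) :
    (∏ i : Fin (N+2), ∏ j : Fin (N+2), if i < j ∧ (i : ℕ) ≠ 0 then c i - c j else 1)
      = ∏ i : Fin (N+1), ∏ j ∈ Finset.Ioi i, (c i.succ - c j.succ) := by
  rw [Fin.prod_univ_succ]
  have h0 : (∏ j : Fin (N+2), if (0 : Fin (N+2)) < j ∧ ((0 : Fin (N+2)) : ℕ) ≠ 0
      then c 0 - c j else 1) = 1 := by
    simp
  rw [h0, one_mul]
  refine Finset.prod_congr rfl fun i _ => ?_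
  rw [Fin.prod_univ_succ]
  have h1 : (if i.succ < (0 : Fin (N+2)) ∧ ((i.succ : Fin (N+2)) : ℕ) ≠ 0
      then c i.succ - c 0 else 1) = 1 := by
    simp [Fin.not_lt_zero]
  rw [h1, one_mul]
  have h2 : ∀ j : Fin (N+1), (i.succ < j.succ ∧ ((i.succ : Fin (N+2)) : ℕ) ≠ 0) ↔ i < j := by
    intro j; simp [Fin.succ_lt_succ_iff]
  have h3 : (∏ j : Fin (N+1), if i.succ < j.succ ∧ ((i.succ : Fin (N+2)) : ℕ) ≠ 0
      then c i.succ - c j.succ else 1)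
      = ∏ j : Fin (N+1), if i < j then c i.succ - c j.succ else 1 :=
    Finset.prod_congr rfl fun j _ => if_congr (h2 j) rfl rfl
  rw [h3, ← Finset.prod_filter, Finset.filter_lt_eq_Ioi]

lemma detB (N : ℕ) (c z : Fin (N+2) → ℝ) :
    Matrix.det (Matrix.of fun i j : Fin (N+2) =>
        (z j - c i) ^ (if (i : ℕ) = 0 then N+1 else N) /
          (Nat.factorial (if (i : ℕ) = 0 then N+1 else N) : ℝ))
      = (1 / (Nat.factorial (N+1) : ℝ)) *
        (∏ k ∈ Finset.range (N+1), (1 : ℝ) / (Nat.factorial k)) ^ 2 *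
        (∏ i : Fin (N+2), ∏ j : Fin (N+2), if i < j ∧ (i : ℕ) ≠ 0 then c i - c j else 1) *
        (∏ i : Fin (N+2), ∏ j ∈ Finset.Ioi i, (z i - z j)) := by
  set m : Fin (N+2) → ℕ := fun i => if (i : ℕ) = 0 then N+1 else N with hm
  set a : Matrix (Fin (N+2)) (Fin (N+2)) ℝ := Matrix.of (fun i k =>
    if N+1-(k:ℕ) ≤ m i then (-c i)^(m i - (N+1-(k:ℕ))) /
      ((Nat.factorial (N+1-(k:ℕ)) : ℝ) * (Nat.factorial (m i - (N+1-(k:ℕ))) : ℝ)) else 0)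
    with ha
  set V : Matrix (Fin (N+2)) (Fin (N+2)) ℝ := Matrix.of (fun k j => z j ^ (N+1-(k:ℕ))) with hV
  have hfact : (Matrix.of fun i j : Fin (N+2) =>
      (z j - c i) ^ (m i) / (Nat.factorial (m i) : ℝ)) = a * V := by
    ext i j
    rw [Matrix.mul_apply]
    simp only [Matrix.of_apply, ha, hV]
    have hmK : m i ≤ N+1 := by rw [hm]; dsimp only; split <;> omega
    rw [binom_entry (m i) (z j) (c i) (N+1) hmK]
    rw [Fin.sum_univ_eq_sum_range (fun k =>
      (if N+1-k ≤ m i then (-c i)^(m i - (N+1-k)) /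
        ((Nat.factorial (N+1-k) : ℝ) * (Nat.factorial (m i - (N+1-k)) : ℝ)) else 0)
        * z j ^ (N+1-k)) (N+2)]
    rw [← Finset.sum_range_reflect]
    refine Finset.sum_congr (by norm_num) fun k hk => ?_
    norm_num
  rw [show (Matrix.of fun i j : Fin (N+2) =>
        (z j - c i) ^ (if (i : ℕ) = 0 then N+1 else N) /
          (Nat.factorial (if (i : ℕ) = 0 then N+1 else N) : ℝ))
      = (Matrix.of fun i j : Fin (N+2) =>
        (z j - c i) ^ (m i) / (Nat.factorial (m i) : ℝ)) from rfl, hfact, Matrix.det_mul]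
  -- determinant of V
  have hdetV : V.det = ∏ i : Fin (N+2), ∏ j ∈ Finset.Ioi i, (z i - z j) := by
    rw [← Matrix.det_transpose, ← det_revVandermonde z]
    congr 1
  have hsub : a.submatrix (0 : Fin (N+2)).succAbove Fin.succ
      = Matrix.of (fun i k : Fin (N+1) =>
          (((Nat.factorial (N - (k:ℕ)) : ℝ) * (Nat.factorial (k:ℕ) : ℝ))⁻¹)
            * Matrix.vandermonde (fun i : Fin (N+1) => -c i.succ) i k) := by
    ext i k
    simp only [Matrix.submatrix_apply, Fin.succAbove_zero, ha, Matrix.of_apply,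
      Matrix.vandermonde_apply, Fin.val_succ]
    have hmi : m i.succ = N := by rw [hm]; simp
    rw [hmi]
    have h1 : N + 1 - ((k:ℕ)+1) = N - (k:ℕ) := by omega
    rw [h1, if_pos (by omega : N - (k:ℕ) ≤ N)]
    have h2 : N - (N - (k:ℕ)) = (k:ℕ) := by omega
    rw [h2, div_eq_inv_mul]
  have hWf : (∏ k : Fin (N+1), (((Nat.factorial (N - (k:ℕ)) : ℝ) * (Nat.factorial (k:ℕ) : ℝ))⁻¹))
      = (∏ k ∈ Finset.range (N+1), (1:ℝ)/(Nat.factorial k)) ^ 2 := by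
    simp only [mul_inv]
    rw [Finset.prod_mul_distrib]
    have h1 : (∏ k : Fin (N+1), ((Nat.factorial (N - (k:ℕ)) : ℝ))⁻¹)
        = ∏ k ∈ Finset.range (N+1), ((Nat.factorial k : ℝ))⁻¹ := by
      rw [Fin.prod_univ_eq_prod_range (fun k => ((Nat.factorial (N - k) : ℝ))⁻¹) (N+1),
        ← Finset.prod_range_reflect (fun k => ((Nat.factorial k : ℝ))⁻¹) (N+1)]
      refine Finset.prod_congr rfl fun k hk => ?_
      norm_num
    have h2 : (∏ k : Fin (N+1), ((Nat.factorial (k:ℕ) : ℝ))⁻¹)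
        = ∏ k ∈ Finset.range (N+1), ((Nat.factorial k : ℝ))⁻¹ :=
      Fin.prod_univ_eq_prod_range (fun k => ((Nat.factorial k : ℝ))⁻¹) (N+1)
    rw [h1, h2, sq]
    simp [one_div]
  have ha00 : a 0 0 = ((Nat.factorial (N+1) : ℝ))⁻¹ := by
    have hm0 : m 0 = N + 1 := by rw [hm]; simp
    simp only [ha, Matrix.of_apply, hm0]
    norm_num
  have hdeta : a.det = ((Nat.factorial (N+1) : ℝ))⁻¹ *
      ((∏ k ∈ Finset.range (N+1), (1:ℝ)/(Nat.factorial k)) ^ 2 *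
        (∏ i : Fin (N+1), ∏ j ∈ Finset.Ioi i, (c i.succ - c j.succ))) := by
    rw [Matrix.det_succ_column_zero, Finset.sum_eq_single 0]
    · rw [hsub, ha00, Matrix.det_mul_row, Matrix.det_vandermonde, hWf]
      have : (∏ i : Fin (N+1), ∏ j ∈ Finset.Ioi i, ((fun i : Fin (N+1) => -c i.succ) j
          - (fun i : Fin (N+1) => -c i.succ) i))
          = ∏ i : Fin (N+1), ∏ j ∈ Finset.Ioi i, (c i.succ - c j.succ) := by
        refine Finset.prod_congr rfl fun i _ => Finset.prod_congr rfl fun j _ => ?_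
        ring
      rw [this]
      simp only [Fin.val_zero, pow_zero, one_mul]
    · intro i _ hi
      have hne : (i : ℕ) ≠ 0 := fun h => hi (Fin.ext h)
      have hai0 : a i 0 = 0 := by
        have hmi : m i = N := by rw [hm]; simp [hne]
        simp only [ha, Matrix.of_apply, hmi]
        rw [if_neg (by norm_num)]
      rw [hai0]
      ring
    · intro h
      exact absurd (Finset.mem_univ 0) h
  rw [hdeta, hdetV, cprod]
  ring

set_option maxHeartbeats 1600000 in
open MeasureTheory in
theorem stmt15' (N : ℕ) (M : ℝ) (hM : 0 < M)
    (φ : Fin (N+2) → ℝ → ℝ) (hφ : ∀ i, IntegrableOn (φ i) (Set.Icc (-M) M))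
    (c : Fin (N+2) → ℝ) :
    Matrix.det (Matrix.of fun i j : Fin (N+2) =>
        ∫ z in Set.Icc (-M) M,
          φ j z * ((z - c i) ^ (if (i : ℕ) = 0 then N+1 else N) /
            (Nat.factorial (if (i : ℕ) = 0 then N+1 else N))))
      = (1 / (Nat.factorial (N+1) : ℝ)) *
        (∏ k ∈ Finset.range (N+1), (1 : ℝ) / (Nat.factorial k)) ^ 2 *
        (∏ i : Fin (N+2), ∏ j : Fin (N+2), if i < j ∧ (i : ℕ) ≠ 0 then c i - c j else 1) *
        ∫ z in (Set.univ.pi fun _ : Fin (N+2) => Set.Icc (-M) M),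
          (∏ k : Fin (N+2), φ k (z k)) *
            (∏ i : Fin (N+2), ∏ j : Fin (N+2), if i < j then z i - z j else 1) := by
  classical
  set S : Set ℝ := Set.Icc (-M) M with hS
  set mi : Fin (N+2) → ℕ := fun i => if (i : ℕ) = 0 then N+1 else N with hmi
  set q : Fin (N+2) → ℝ → ℝ := fun i z =>
    (z - c i) ^ (mi i) / (Nat.factorial (mi i) : ℝ) with hq
  set ψ : Fin (N+2) → ℝ → ℝ := fun j => S.indicator (φ j) with hψ
  set g : Fin (N+2) → Fin (N+2) → ℝ → ℝ := fun i j z => ψ j z * q i z with hg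
  -- step A : rewrite entries as integrals over ℝ
  have hA : ∀ i j : Fin (N+2), (∫ z in S, φ j z * q i z) = ∫ z, g i j z := by
    intro i j
    rw [← integral_indicator measurableSet_Icc]
    congr 1
    funext z
    simp only [hg, hψ]
    rw [Set.indicator_mul_left]
  -- integrability
  have hgint : ∀ i j : Fin (N+2), Integrable (g i j) := by
    intro i j
    have : g i j = S.indicator (fun z => φ j z * q i z) := by
      funext z; simp only [hg, hψ]; rw [Set.indicator_mul_left]
    rw [this, integrable_indicator_iff measurableSet_Icc]
    refine (hφ j).mul_continuousOn ?_ isCompact_Icc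
    exact (Continuous.continuousOn (by fun_prop))
  -- step B: determinant expansion + Fubini
  rw [show (Matrix.of fun i j : Fin (N+2) =>
      ∫ z in Set.Icc (-M) M,
        φ j z * ((z - c i) ^ (if (i : ℕ) = 0 then N+1 else N) /
          (Nat.factorial (if (i : ℕ) = 0 then N+1 else N))))
    = (Matrix.of fun i j : Fin (N+2) => ∫ z, g i j z) from by
      ext i j; exact hA i j, Matrix.det_apply']
  have hswap : ∀ σ : Equiv.Perm (Fin (N+2)),
      (∏ i : Fin (N+2), (Matrix.of fun i j : Fin (N+2) => ∫ z, g i j z) (σ i) i)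
        = ∫ x : Fin (N+2) → ℝ, ∏ i : Fin (N+2), g (σ i) i (x i) := by
    intro σ
    simp only [Matrix.of_apply]
    exact (MeasureTheory.integral_fintype_prod_eq_prod
      (fun i => g (σ i) i)).symm
  simp only [hswap]
  simp only [← MeasureTheory.integral_const_mul]
  rw [← MeasureTheory.integral_finset_sum Finset.univ (fun σ _ =>
    ((Integrable.fintype_prod (fun i => hgint (σ i) i)).const_mul _))]
  -- pointwise identity
  set C : ℝ := (1 / (Nat.factorial (N+1) : ℝ)) *
        (∏ k ∈ Finset.range (N+1), (1 : ℝ) / (Nat.factorial k)) ^ 2 *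
        (∏ i : Fin (N+2), ∏ j : Fin (N+2), if i < j ∧ (i : ℕ) ≠ 0 then c i - c j else 1)
    with hC
  have hpt : ∀ x : Fin (N+2) → ℝ,
      (∑ σ : Equiv.Perm (Fin (N+2)), ((Equiv.Perm.sign σ : ℤ) : ℝ) * ∏ i, g (σ i) i (x i))
        = C * ((∏ k, ψ k (x k)) * (∏ i : Fin (N+2), ∏ j ∈ Finset.Ioi i, (x i - x j))) := by
    intro x
    have h1 : ∀ σ : Equiv.Perm (Fin (N+2)),
        (∏ i, g (σ i) i (x i)) = (∏ k, ψ k (x k)) * ∏ i, q (σ i) (x i) := by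
      intro σ
      simp only [hg]
      rw [Finset.prod_mul_distrib]
    simp only [h1]
    rw [show (∑ σ : Equiv.Perm (Fin (N+2)), ((Equiv.Perm.sign σ : ℤ) : ℝ) *
        ((∏ k, ψ k (x k)) * ∏ i, q (σ i) (x i)))
      = (∏ k, ψ k (x k)) * ∑ σ : Equiv.Perm (Fin (N+2)), ((Equiv.Perm.sign σ : ℤ) : ℝ) *
        ∏ i, q (σ i) (x i) from by
        rw [Finset.mul_sum]; exact Finset.sum_congr rfl fun σ _ => by ring]
    have h2 : (∑ σ : Equiv.Perm (Fin (N+2)), ((Equiv.Perm.sign σ : ℤ) : ℝ)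
          * ∏ i, q (σ i) (x i))
        = Matrix.det (Matrix.of fun i j : Fin (N+2) => q i (x j)) := by
      rw [Matrix.det_apply']
      simp only [Matrix.of_apply]
    rw [h2]
    have h3 := detB N c x
    rw [hq]
    simp only [hmi] at h3 ⊢
    rw [h3, hC]
    ring
  simp only [hpt]
  rw [MeasureTheory.integral_const_mul]
  -- indicator step
  have hind : (fun x : Fin (N+2) → ℝ =>
        (∏ k, ψ k (x k)) * (∏ i : Fin (N+2), ∏ j ∈ Finset.Ioi i, (x i - x j)))
      = (Set.univ.pi fun _ : Fin (N+2) => S).indicator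
          (fun x => (∏ k, φ k (x k)) * (∏ i : Fin (N+2), ∏ j ∈ Finset.Ioi i, (x i - x j))) := by
    funext x
    by_cases hx : x ∈ Set.univ.pi fun _ : Fin (N+2) => S
    · rw [Set.indicator_of_mem hx]
      congr 1
      exact Finset.prod_congr rfl fun k _ => Set.indicator_of_mem (hx k trivial) _
    · rw [Set.indicator_of_notMem hx]
      have : ∃ k, x k ∉ S := by
        by_contra h
        push_neg at h
        exact hx fun k _ => h k
      obtain ⟨k, hk⟩ := this
      have hz : ψ k (x k) = 0 := Set.indicator_of_notMem hk _
      rw [Finset.prod_eq_zero (Finset.mem_univ k) hz, zero_mul]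
  rw [hind, MeasureTheory.integral_indicator
    (MeasurableSet.univ_pi fun _ => measurableSet_Icc)]
  simp only [vdm_eq']
  rw [hC, MeasureTheory.integral_const_mul]

end Aux

theorem stmt15 (n : ℕ) (hn : 2 ≤ n) (M : ℝ) (hM : 0 < M)
    (φ : Fin n → ℝ → ℝ) (hφ : ∀ i, IntegrableOn (φ i) (Set.Icc (-M) M))
    (c : Fin n → ℝ) :
    Matrix.det (Matrix.of fun i j : Fin n =>
        ∫ z in Set.Icc (-M) M,
          φ j z * ((z - c i) ^ (if (i : ℕ) = 0 then n - 1 else n - 2) /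
            (Nat.factorial (if (i : ℕ) = 0 then n - 1 else n - 2))))
      = (1 / (Nat.factorial (n - 1) : ℝ)) *
        (∏ k ∈ Finset.range (n - 1), (1 : ℝ) / (Nat.factorial k)) ^ 2 *
        (∏ i : Fin n, ∏ j : Fin n, if i < j ∧ (i : ℕ) ≠ 0 then c i - c j else 1) *
        ∫ z in (Set.univ.pi fun _ : Fin n => Set.Icc (-M) M),
          (∏ k : Fin n, φ k (z k)) * vdm z := by
  obtain ⟨N, rfl⟩ : ∃ N, n = N + 2 := ⟨n - 2, by omega⟩
  exact stmt15' N M hM φ hφ c
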